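/- Let Z ~ HRPar_a(α,Q,l) be a generalized Hüsler-Reiss Pareto random vector with density proportional to exp(-½ (log z)ᵀ D_α Q D_α (log z) + lᵀ D_α log z) ∏ z_i^{-1} on {z ≰ a}. Then for every β ∈ (0,∞)^d, the coordinatewise power Z^β = (Z_1^{β_1},…,Z_d^{β_d}) has distribution HRPar_{a^β}(α/β, Q, l), where α/β and a^β are coordinatewise, and the normalizing constants satisfy C_{a^β}(α/β,Q,l) = C_a(α,Q,l) ∏_{i=1}^d β_i. -/

import Mathlib

open MeasureTheory Matrix

/-- Unnormalized generalized Hüsler-Reiss Pareto density on `{z > 0 : z ≰ a}`,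
with tail-index vector `α` and `D_α` the diagonal matrix with diagonal `α`. -/
noncomputable def ghrDens {d : ℕ} (α : Fin d → ℝ) (Q : Matrix (Fin d) (Fin d) ℝ)
    (l a : Fin d → ℝ) (z : Fin d → ℝ) : ℝ :=
  if (∀ i, 0 < z i) ∧ ¬ ∀ i, z i ≤ a i then
    Real.exp (-(1 / 2) *
        ((fun i => Real.log (z i)) ⬝ᵥ
          (Matrix.diagonal α * Q * Matrix.diagonal α).mulVec fun i => Real.log (z i)) +
        l ⬝ᵥ (Matrix.diagonal α).mulVec fun i => Real.log (z i)) * ∏ i, (z i)⁻¹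
  else 0

/-- Generalized Hüsler-Reiss Pareto normalizing constant `C_a(α,Q,l)`. -/
noncomputable def ghrC {d : ℕ} (α : Fin d → ℝ) (Q : Matrix (Fin d) (Fin d) ℝ)
    (l a : Fin d → ℝ) : ℝ :=
  ∫ z, ghrDens α Q l a z

namespace GHRaux

variable {d : ℕ}

/-- The coordinatewise power map. -/
noncomputable def Tmap (β : Fin d → ℝ) (z : Fin d → ℝ) : Fin d → ℝ := fun i => z i ^ β i

/-- Its derivative. -/
noncomputable def Tder (β z : Fin d → ℝ) : (Fin d → ℝ) →L[ℝ] (Fin d → ℝ) :=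
  ContinuousLinearMap.pi fun i =>
    (β i * z i ^ (β i - 1)) • ContinuousLinearMap.proj i

lemma hasFDerivAt_Tmap (β : Fin d → ℝ) {z : Fin d → ℝ} (hz : ∀ i, 0 < z i) :
    HasFDerivAt (Tmap β) (Tder β z) z := by
  apply hasFDerivAt_pi.2
  intro i
  exact (hasFDerivAt_apply i z).rpow_const (Or.inl (hz i).ne')

lemma det_Tder (β z : Fin d → ℝ) :
    (Tder β z).det = ∏ i, (β i * z i ^ (β i - 1)) := by
  have hm : LinearMap.toMatrix' ((Tder β z) : (Fin d → ℝ) →ₗ[ℝ] (Fin d → ℝ)) =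
      Matrix.diagonal (fun i => β i * z i ^ (β i - 1)) := by
    ext i j
    by_cases h : i = j <;>
      simp [Tder, LinearMap.toMatrix'_apply, Matrix.diagonal_apply, Pi.single_apply, h]
  rw [ContinuousLinearMap.det, ← LinearMap.det_toMatrix', hm, Matrix.det_diagonal]

lemma measurable_Tmap (β : Fin d → ℝ) (hβ : ∀ i, 0 < β i) : Measurable (Tmap β) :=
  measurable_pi_lambda _ fun i =>
    (Real.continuous_rpow_const (hβ i).le).measurable.comp (measurable_pi_apply i)

lemma injOn_Tmap (β : Fin d → ℝ) (hβ : ∀ i, 0 < β i) :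
    Set.InjOn (Tmap β) {z | ∀ i, 0 < z i} := by
  intro z hz w hw h
  funext i
  have h1 : z i ^ β i = w i ^ β i := congrFun h i
  calc z i = (z i ^ β i) ^ (β i)⁻¹ := (Real.rpow_rpow_inv (hz i).le (hβ i).ne').symm
    _ = (w i ^ β i) ^ (β i)⁻¹ := by rw [h1]
    _ = w i := Real.rpow_rpow_inv (hw i).le (hβ i).ne'

lemma image_Tmap (β : Fin d → ℝ) (hβ : ∀ i, 0 < β i) :
    Tmap β '' {z | ∀ i, 0 < z i} = {z | ∀ i, 0 < z i} := by
  ext w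
  constructor
  · rintro ⟨z, hz, rfl⟩ i
    exact Real.rpow_pos_of_pos (hz i) _
  · intro hw
    refine ⟨fun i => w i ^ (β i)⁻¹, fun i => Real.rpow_pos_of_pos (hw i) _, ?_⟩
    funext i
    exact Real.rpow_inv_rpow (hw i).le (hβ i).ne'

/-- The key pointwise density transformation identity. -/
lemma dens_pow (α β : Fin d → ℝ) (Q : Matrix (Fin d) (Fin d) ℝ) (l a : Fin d → ℝ)
    (hβ : ∀ i, 0 < β i) (ha : ∀ i, 0 < a i) (z : Fin d → ℝ) (hz : ∀ i, 0 < z i) :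
    ghrDens (fun i => α i / β i) Q l (fun i => a i ^ β i) (Tmap β z) *
      ∏ i, (β i * z i ^ (β i - 1)) = (∏ i, β i) * ghrDens α Q l a z := by
  have hc1 : ∀ i, 0 < Tmap β z i := fun i => Real.rpow_pos_of_pos (hz i) _
  have hc2 : (∀ i, Tmap β z i ≤ a i ^ β i) ↔ ∀ i, z i ≤ a i :=
    forall_congr' fun i => Real.rpow_le_rpow_iff (hz i).le (ha i).le (hβ i)
  by_cases h : ∀ i, z i ≤ a i
  · simp [ghrDens, h, hc2.2 h]
  · -- both conditions hold
    have hlog : (fun i => Real.log (Tmap β z i)) = fun i => β i * Real.log (z i) := by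
      funext i; exact Real.log_rpow (hz i) _
    set v : Fin d → ℝ := fun i => Real.log (z i) with hv
    set v' : Fin d → ℝ := fun i => β i * Real.log (z i) with hv'
    have hD : (Matrix.diagonal (fun i => α i / β i)).mulVec v' =
        (Matrix.diagonal α).mulVec v := by
      funext i
      have h0 := (hβ i).ne'
      simp only [Matrix.mulVec_diagonal, hv', hv]
      field_simp
    have hdot : ∀ u : Fin d → ℝ,
        v' ⬝ᵥ (Matrix.diagonal (fun i => α i / β i)).mulVec u =
        v ⬝ᵥ (Matrix.diagonal α).mulVec u := by
      intro u
      simp only [dotProduct, Matrix.mulVec_diagonal, hv', hv]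
      refine Finset.sum_congr rfl fun i _ => ?_
      have h0 := (hβ i).ne'
      field_simp
    have hexp : -(1 / 2) * (v' ⬝ᵥ
          (Matrix.diagonal (fun i => α i / β i) * Q *
            Matrix.diagonal (fun i => α i / β i)).mulVec v') +
          l ⬝ᵥ (Matrix.diagonal (fun i => α i / β i)).mulVec v' =
        -(1 / 2) * (v ⬝ᵥ (Matrix.diagonal α * Q * Matrix.diagonal α).mulVec v) +
          l ⬝ᵥ (Matrix.diagonal α).mulVec v := by
      simp only [← Matrix.mulVec_mulVec]
      rw [hD, hdot]
    have hprod : (∏ i, (Tmap β z i)⁻¹) * ∏ i, (β i * z i ^ (β i - 1)) =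
        (∏ i, β i) * ∏ i, (z i)⁻¹ := by
      rw [← Finset.prod_mul_distrib, ← Finset.prod_mul_distrib]
      refine Finset.prod_congr rfl fun i _ => ?_
      have hzi := (hz i).ne'
      have : (Tmap β z i)⁻¹ * (β i * z i ^ (β i - 1)) =
          β i * (z i ^ (β i - 1) / z i ^ β i) := by
        unfold Tmap; field_simp
      rw [this, ← Real.rpow_sub (hz i)]
      have : β i - 1 - β i = (-1 : ℝ) := by ring
      rw [this, Real.rpow_neg_one]
    simp only [ghrDens, if_pos (And.intro hc1 (hc2.not.2 h)), if_pos (And.intro hz h), hlog]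
    rw [mul_assoc, hprod, hexp]
    ring

end GHRaux

open GHRaux in
/-- Power transformation of the generalized Hüsler-Reiss Pareto model: if
`Z ~ HRPar_a(α,Q,l)` and `β ∈ (0,∞)^d`, then `Z^β ~ HRPar_{a^β}(α/β, Q, l)` and
`C_{a^β}(α/β,Q,l) = C_a(α,Q,l) ∏ β_i`. -/
theorem generalized_hr_pareto_power_transform
    {Ω : Type*} [MeasurableSpace Ω] (μ : Measure Ω) [IsProbabilityMeasure μ]
    {d : ℕ} (hd : 2 ≤ d)
    (α : Fin d → ℝ) (hα : ∀ i, 0 < α i)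
    (Q : Matrix (Fin d) (Fin d) ℝ) (l a : Fin d → ℝ)
    (hQ : Q.PosSemidef)
    (hker : ∀ v : Fin d → ℝ, Q.mulVec v = 0 ↔ ∃ c : ℝ, v = fun _ => c)
    (hl : ∑ i, l i = -1) (ha : ∀ i, 0 < a i)
    (Z : Ω → Fin d → ℝ) (hZ : Measurable Z)
    (hdist : Measure.map Z μ = volume.withDensity fun z =>
      ENNReal.ofReal ((ghrC α Q l a)⁻¹ * ghrDens α Q l a z))
    (β : Fin d → ℝ) (hβ : ∀ i, 0 < β i) :
    (Measure.map (fun ω i => Z ω i ^ β i) μ =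
      volume.withDensity fun z => ENNReal.ofReal
        ((ghrC (fun i => α i / β i) Q l fun i => a i ^ β i)⁻¹ *
          ghrDens (fun i => α i / β i) Q l (fun i => a i ^ β i) z)) ∧
    ghrC (fun i => α i / β i) Q l (fun i => a i ^ β i) =
      ghrC α Q l a * ∏ i, β i := by
  set U : Set (Fin d → ℝ) := {z | ∀ i, 0 < z i} with hUdef
  have hU : MeasurableSet U := by
    have : U = ⋂ i, {z : Fin d → ℝ | 0 < z i} := by ext z; simp [hUdef, Set.mem_iInter]
    rw [this]
    exact MeasurableSet.iInter fun i => measurableSet_lt measurable_const (measurable_pi_apply i)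
  have hf' : ∀ z ∈ U, HasFDerivWithinAt (Tmap β) (Tder β z) U z := fun z hz =>
    (hasFDerivAt_Tmap β hz).hasFDerivWithinAt
  have hinj := injOn_Tmap β hβ
  have himg := image_Tmap β hβ
  have hdet_pos : ∀ z ∈ U, 0 < (Tder β z).det := by
    intro z hz
    rw [det_Tder]
    exact Finset.prod_pos fun i _ => mul_pos (hβ i) (Real.rpow_pos_of_pos (hz i) _)
  -- densities vanish off U
  have hvan : ∀ (α' a' : Fin d → ℝ) (z : Fin d → ℝ), z ∉ U → ghrDens α' Q l a' z = 0 := by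
    intro α' a' z hz
    rw [ghrDens, if_neg]
    intro h
    exact hz h.1
  -- Part 2 : the normalizing constants
  have hC : ghrC (fun i => α i / β i) Q l (fun i => a i ^ β i) =
      ghrC α Q l a * ∏ i, β i := by
    have h1 : ghrC (fun i => α i / β i) Q l (fun i => a i ^ β i) =
        ∫ w in U, ghrDens (fun i => α i / β i) Q l (fun i => a i ^ β i) w := by
      rw [ghrC, ← integral_indicator hU]
      congr 1
      funext w
      by_cases hw : w ∈ U
      · simp [Set.indicator_of_mem hw]
      · simp [Set.indicator_of_notMem hw, hvan _ _ w hw]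
    have h2 : ghrC α Q l a = ∫ z in U, ghrDens α Q l a z := by
      rw [ghrC, ← integral_indicator hU]
      congr 1
      funext w
      by_cases hw : w ∈ U
      · simp [Set.indicator_of_mem hw]
      · simp [Set.indicator_of_notMem hw, hvan _ _ w hw]
    have himg' : Tmap β '' U = U := himg
    rw [h1, ← himg',
      integral_image_eq_integral_abs_det_fderiv_smul volume hU hf' hinj]
    have h3 : ∀ z ∈ U, |(Tder β z).det| •
        ghrDens (fun i => α i / β i) Q l (fun i => a i ^ β i) (Tmap β z) =
        (∏ i, β i) * ghrDens α Q l a z := by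
      intro z hz
      rw [abs_of_pos (hdet_pos z hz), smul_eq_mul, det_Tder, mul_comm]
      exact dens_pow α β Q l a hβ ha z hz
    rw [setIntegral_congr_fun hU h3, MeasureTheory.integral_const_mul, ← h2, mul_comm]
  refine ⟨?_, hC⟩
  -- Part 1 : the distribution
  have hT : Measurable (Tmap β) := measurable_Tmap β hβ
  have hmap : Measure.map (fun ω i => Z ω i ^ β i) μ =
      Measure.map (Tmap β) (Measure.map Z μ) := by
    rw [Measure.map_map hT hZ]
    rfl
  rw [hmap, hdist]
  set c := ghrC α Q l a with hc
  set c' := ghrC (fun i => α i / β i) Q l (fun i => a i ^ β i) with hc'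
  have himg' : Tmap β '' U = U := himg
  have hPβ : (∏ i, β i) ≠ 0 := (Finset.prod_pos fun i _ => hβ i).ne'
  ext A hA
  rw [Measure.map_apply hT hA, withDensity_apply _ (hT hA), withDensity_apply _ hA]
  set fh : (Fin d → ℝ) → ENNReal := fun z => ENNReal.ofReal (c⁻¹ * ghrDens α Q l a z)
    with hfh
  set gh : (Fin d → ℝ) → ENNReal := fun z => ENNReal.ofReal
    (c'⁻¹ * ghrDens (fun i => α i / β i) Q l (fun i => a i ^ β i) z) with hgh
  have hfh0 : ∀ z, z ∉ U → fh z = 0 := by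
    intro z hz; simp [hfh, hvan _ _ z hz]
  have hgh0 : ∀ z, z ∉ U → gh z = 0 := by
    intro z hz; simp [hgh, hvan _ _ z hz]
  have hrestrict : ∀ (h : (Fin d → ℝ) → ENNReal) (s : Set (Fin d → ℝ)), MeasurableSet s →
      (∀ z, z ∉ U → h z = 0) → ∫⁻ z in s, h z = ∫⁻ z in U, s.indicator h z := by
    intro h s hs hh
    rw [← lintegral_indicator hs, ← lintegral_indicator hU]
    congr 1
    funext w
    by_cases hw : w ∈ U
    · simp [Set.indicator_of_mem hw]
    · by_cases hwa : w ∈ s <;>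
        simp [Set.indicator_of_notMem hw, hwa, hh w hw]
  rw [hrestrict fh _ (hT hA) hfh0, hrestrict gh _ hA hgh0]
  conv_rhs => rw [← himg']
  rw [lintegral_image_eq_lintegral_abs_det_fderiv_mul volume hU hf' hinj (A.indicator gh)]
  refine setLIntegral_congr_fun hU (fun z hz => ?_)
  by_cases hzA : Tmap β z ∈ A
  · rw [Set.indicator_of_mem hzA, Set.indicator_of_mem (by exact hzA : z ∈ Tmap β ⁻¹' A)]
    rw [hfh, hgh, ← ENNReal.ofReal_mul (abs_nonneg _)]
    beta_reduce
    congr 1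
    have key := dens_pow α β Q l a hβ ha z hz
    rw [abs_of_pos (hdet_pos z hz), det_Tder, hC, mul_inv]
    set P := ∏ i, (β i * z i ^ (β i - 1))
    set B := ∏ i, β i
    set D' := ghrDens (fun i => α i / β i) Q l (fun i => a i ^ β i) (Tmap β z)
    set D := ghrDens α Q l a z
    -- key : D' * P = B * D ; goal : P * (c⁻¹ * B⁻¹ * D') = c⁻¹ * D
    rw [show P * (c⁻¹ * B⁻¹ * D') = c⁻¹ * B⁻¹ * (D' * P) from by ring, key,
      show c⁻¹ * B⁻¹ * (B * D) = B⁻¹ * B * (c⁻¹ * D) from by ring,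
      inv_mul_cancel₀ hPβ, one_mul]
  · rw [Set.indicator_of_notMem hzA, Set.indicator_of_notMem
      (by exact hzA : z ∉ Tmap β ⁻¹' A), mul_zero]
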